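/- Let ω_s be the near-symplectic form k(df_s ∧ dg) + σ_s on the closed unit ball D⁴ ⊂ ℝ⁴, where f_s = t² + st − x² + y² − z², g = 2tx + 2yz, and σ_s is the closed form ((2t+s)2t + 4x²) dy∧dz + (4y² + 4z²) dt∧dx + 2((2t+s)2z − 4xy) dz∧dx + 2(4xy − 4tz − sz) dt∧dy. Then ω_s is closed for all k and s; moreover σ_s vanishes exactly on the set {y = z = 0, x² + t² + (s/2)t = 0}, the critical set of F_s = (f_s, g). -/

import Mathlib

noncomputable def pT (f : ℝ → ℝ → ℝ → ℝ → ℝ) (t x y z : ℝ) : ℝ :=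
  deriv (fun u => f u x y z) t
noncomputable def pX (f : ℝ → ℝ → ℝ → ℝ → ℝ) (t x y z : ℝ) : ℝ :=
  deriv (fun u => f t u y z) x
noncomputable def pY (f : ℝ → ℝ → ℝ → ℝ → ℝ) (t x y z : ℝ) : ℝ :=
  deriv (fun u => f t x u z) y
noncomputable def pZ (f : ℝ → ℝ → ℝ → ℝ → ℝ) (t x y z : ℝ) : ℝ :=
  deriv (fun u => f t x y u) z

/-! Coefficients of `ω_s = k (df_s ∧ dg) + σ_s`, where
`f_s = t² + st − x² + y² − z²`, `g = 2tx + 2yz`, and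
`σ_s = ((2t+s)2t + 4x²) dy∧dz + (4y² + 4z²) dt∧dx
       + 2((2t+s)2z − 4xy) dz∧dx + 2(4xy − 4tz − sz) dt∧dy`,
in the basis `dt∧dx, dt∧dy, dt∧dz, dx∧dy, dx∧dz, dy∧dz`. -/

def Wtx (k s : ℝ) : ℝ → ℝ → ℝ → ℝ → ℝ := fun t x y z =>
  k * ((2 * t + s) * (2 * t) + 4 * x ^ 2) + (4 * y ^ 2 + 4 * z ^ 2)
def Wty (k s : ℝ) : ℝ → ℝ → ℝ → ℝ → ℝ := fun t x y z =>
  k * ((2 * t + s) * (2 * z) - 4 * x * y) + 2 * (4 * x * y - 4 * t * z - s * z)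
def Wtz (k s : ℝ) : ℝ → ℝ → ℝ → ℝ → ℝ := fun t x y z =>
  k * ((2 * t + s) * (2 * y) + 4 * x * z)
def Wxy (k s : ℝ) : ℝ → ℝ → ℝ → ℝ → ℝ := fun t x y z =>
  k * (-(4 * x * z) - 4 * t * y)
def Wxz (k s : ℝ) : ℝ → ℝ → ℝ → ℝ → ℝ := fun t x y z =>
  k * (-(4 * x * y) + 4 * t * z) - 2 * ((2 * t + s) * (2 * z) - 4 * x * y)
def Wyz (k s : ℝ) : ℝ → ℝ → ℝ → ℝ → ℝ := fun t x y z =>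
  k * (4 * y ^ 2 + 4 * z ^ 2) + ((2 * t + s) * (2 * t) + 4 * x ^ 2)

/-- derivative of a quadratic polynomial -/
lemma dquad18 (f : ℝ → ℝ) (a b c t : ℝ) (h : ∀ u, f u = a * u ^ 2 + b * u + c) :
    deriv f t = 2 * a * t + b := by
  have hf : f = fun u : ℝ => a * u ^ 2 + b * u + c := funext h
  have h' : HasDerivAt (fun u : ℝ => a * u ^ 2 + b * u + c) (a * (2 * t ^ 1) + b * 1) t :=
    (((hasDerivAt_pow 2 t).const_mul a).add ((hasDerivAt_id t).const_mul b)).add_const c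
  rw [hf, h'.deriv]; ring

/-- the map `F_s` (written with `*` instead of `^2`) -/
noncomputable def FF18 (s : ℝ) : ℝ × ℝ × ℝ × ℝ → ℝ × ℝ := fun q =>
  (q.1 * q.1 + s * q.1 - q.2.1 * q.2.1 + q.2.2.1 * q.2.2.1 - q.2.2.2 * q.2.2.2,
   2 * q.1 * q.2.1 + 2 * q.2.2.1 * q.2.2.2)

lemma fderiv_FF18 (s : ℝ) (p : ℝ × ℝ × ℝ × ℝ) (v : ℝ × ℝ × ℝ × ℝ) :
    fderiv ℝ (FF18 s) p v =
      ((2 * p.1 + s) * v.1 - 2 * p.2.1 * v.2.1 + 2 * p.2.2.1 * v.2.2.1 - 2 * p.2.2.2 * v.2.2.2,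
       2 * p.2.1 * v.1 + 2 * p.1 * v.2.1 + 2 * p.2.2.2 * v.2.2.1 + 2 * p.2.2.1 * v.2.2.2) := by
  have h1 : HasFDerivAt (fun q : ℝ × ℝ × ℝ × ℝ => q.1)
      (ContinuousLinearMap.fst ℝ ℝ (ℝ × ℝ × ℝ)) p := hasFDerivAt_fst
  have hs : HasFDerivAt (fun q : ℝ × ℝ × ℝ × ℝ => q.2)
      (ContinuousLinearMap.snd ℝ ℝ (ℝ × ℝ × ℝ)) p := hasFDerivAt_snd
  have h2 : HasFDerivAt (fun q : ℝ × ℝ × ℝ × ℝ => q.2.1) _ p := hasFDerivAt_fst.comp p hs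
  have hss : HasFDerivAt (fun q : ℝ × ℝ × ℝ × ℝ => q.2.2) _ p := hasFDerivAt_snd.comp p hs
  have h3 : HasFDerivAt (fun q : ℝ × ℝ × ℝ × ℝ => q.2.2.1) _ p := hasFDerivAt_fst.comp p hss
  have h4 : HasFDerivAt (fun q : ℝ × ℝ × ℝ × ℝ => q.2.2.2) _ p := hasFDerivAt_snd.comp p hss
  have hf1 : HasFDerivAt
      (fun q : ℝ × ℝ × ℝ × ℝ =>
        q.1 * q.1 + s * q.1 - q.2.1 * q.2.1 + q.2.2.1 * q.2.2.1 - q.2.2.2 * q.2.2.2) _ p :=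
    ((((h1.mul h1).add (h1.const_mul s)).sub (h2.mul h2)).add (h3.mul h3)).sub (h4.mul h4)
  have hf2 : HasFDerivAt
      (fun q : ℝ × ℝ × ℝ × ℝ => 2 * q.1 * q.2.1 + 2 * q.2.2.1 * q.2.2.2) _ p :=
    ((h1.const_mul 2).mul h2).add ((h3.const_mul 2).mul h4)
  have hF : HasFDerivAt (FF18 s) _ p := hf1.prodMk hf2
  rw [hF.fderiv]
  simp [ContinuousLinearMap.comp_apply]
  constructor <;> ring

lemma rank_lt_two_iff18 (f : (ℝ × ℝ × ℝ × ℝ) →L[ℝ] ℝ × ℝ) :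
    LinearMap.rank f.toLinearMap < 2 ↔ ¬ Function.Surjective f := by
  have hr : LinearMap.rank f.toLinearMap =
      (Module.finrank ℝ (LinearMap.range f.toLinearMap) : Cardinal) := by
    rw [LinearMap.rank, Module.finrank_eq_rank]
  have hdim : Module.finrank ℝ (ℝ × ℝ) = 2 := by simp
  rw [hr]
  have hcast : ((Module.finrank ℝ (LinearMap.range f.toLinearMap) : Cardinal) < 2) ↔
      Module.finrank ℝ (LinearMap.range f.toLinearMap) < 2 := by norm_cast
  rw [hcast]
  constructor
  · intro h hsurj
    have ht : LinearMap.range f.toLinearMap = ⊤ := LinearMap.range_eq_top.mpr hsurj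
    rw [ht, finrank_top, hdim] at h
    exact lt_irrefl 2 h
  · intro h
    have ht : LinearMap.range f.toLinearMap ≠ ⊤ := fun e => h (LinearMap.range_eq_top.mp e)
    have := Submodule.finrank_lt (K := ℝ) (V := ℝ × ℝ) ht
    rw [hdim] at this
    omega

/-- `ω_s = k(df_s ∧ dg) + σ_s` is closed for all `k` and `s`; moreover `σ_s`
vanishes exactly on `{y = z = 0, x² + t² + (s/2)t = 0}`, the critical set of
`F_s = (f_s, g)`. -/
theorem stmt18 (k s : ℝ) :
    (∀ t x y z : ℝ,
      pT (Wxy k s) t x y z - pX (Wty k s) t x y z + pY (Wtx k s) t x y z = 0 ∧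
      pT (Wxz k s) t x y z - pX (Wtz k s) t x y z + pZ (Wtx k s) t x y z = 0 ∧
      pT (Wyz k s) t x y z - pY (Wtz k s) t x y z + pZ (Wty k s) t x y z = 0 ∧
      pX (Wyz k s) t x y z - pY (Wxz k s) t x y z + pZ (Wxy k s) t x y z = 0) ∧
    {p : ℝ × ℝ × ℝ × ℝ |
        4 * p.2.2.1 ^ 2 + 4 * p.2.2.2 ^ 2 = 0 ∧
        2 * (4 * p.2.1 * p.2.2.1 - 4 * p.1 * p.2.2.2 - s * p.2.2.2) = 0 ∧
        -(2 * ((2 * p.1 + s) * (2 * p.2.2.2) - 4 * p.2.1 * p.2.2.1)) = 0 ∧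
        (2 * p.1 + s) * (2 * p.1) + 4 * p.2.1 ^ 2 = 0} =
      {p : ℝ × ℝ × ℝ × ℝ |
        p.2.2.1 = 0 ∧ p.2.2.2 = 0 ∧
        p.2.1 ^ 2 + p.1 ^ 2 + (s / 2) * p.1 = 0} ∧
    {p : ℝ × ℝ × ℝ × ℝ |
        p.2.2.1 = 0 ∧ p.2.2.2 = 0 ∧
        p.2.1 ^ 2 + p.1 ^ 2 + (s / 2) * p.1 = 0} =
      {p : ℝ × ℝ × ℝ × ℝ |
        LinearMap.rank (fderiv ℝ
          (fun q : ℝ × ℝ × ℝ × ℝ =>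
            ((q.1 ^ 2 + s * q.1 - q.2.1 ^ 2 + q.2.2.1 ^ 2 - q.2.2.2 ^ 2,
              2 * q.1 * q.2.1 + 2 * q.2.2.1 * q.2.2.2) : ℝ × ℝ)) p).toLinearMap < 2} := by
  refine ⟨?_, ?_, ?_⟩
  · -- closedness
    intro t x y z
    have e1 : pT (Wxy k s) t x y z = 2 * 0 * t + (-(4 * k * y)) := by
      rw [pT, dquad18 _ 0 (-(4 * k * y)) (k * (-(4 * x * z))) t
        (fun u => by simp only [Wxy]; ring)]
    have e2 : pX (Wty k s) t x y z = 2 * 0 * x + (-(4 * k * y) + 8 * y) := by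
      rw [pX, dquad18 _ 0 (-(4 * k * y) + 8 * y) (k * ((2 * t + s) * (2 * z)) +
        2 * (-(4 * t * z) - s * z)) x (fun u => by simp only [Wty]; ring)]
    have e3 : pY (Wtx k s) t x y z = 2 * 4 * y + 0 := by
      rw [pY, dquad18 _ 4 0 (k * ((2 * t + s) * (2 * t) + 4 * x ^ 2) + 4 * z ^ 2) y
        (fun u => by simp only [Wtx]; ring)]
    have e4 : pT (Wxz k s) t x y z = 2 * 0 * t + (4 * k * z - 8 * z) := by
      rw [pT, dquad18 _ 0 (4 * k * z - 8 * z) (k * (-(4 * x * y)) - 2 * (s * (2 * z) -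
        4 * x * y)) t (fun u => by simp only [Wxz]; ring)]
    have e5 : pX (Wtz k s) t x y z = 2 * 0 * x + (4 * k * z) := by
      rw [pX, dquad18 _ 0 (4 * k * z) (k * ((2 * t + s) * (2 * y))) x
        (fun u => by simp only [Wtz]; ring)]
    have e6 : pZ (Wtx k s) t x y z = 2 * 4 * z + 0 := by
      rw [pZ, dquad18 _ 4 0 (k * ((2 * t + s) * (2 * t) + 4 * x ^ 2) + 4 * y ^ 2) z
        (fun u => by simp only [Wtx]; ring)]
    have e7 : pT (Wyz k s) t x y z = 2 * 4 * t + 2 * s := by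
      rw [pT, dquad18 _ 4 (2 * s) (k * (4 * y ^ 2 + 4 * z ^ 2) + 4 * x ^ 2) t
        (fun u => by simp only [Wyz]; ring)]
    have e8 : pY (Wtz k s) t x y z = 2 * 0 * y + (2 * k * (2 * t + s)) := by
      rw [pY, dquad18 _ 0 (2 * k * (2 * t + s)) (k * (4 * x * z)) y
        (fun u => by simp only [Wtz]; ring)]
    have e9 : pZ (Wty k s) t x y z = 2 * 0 * z + (2 * k * (2 * t + s) - 8 * t - 2 * s) := by
      rw [pZ, dquad18 _ 0 (2 * k * (2 * t + s) - 8 * t - 2 * s) (k * (-(4 * x * y)) +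
        2 * (4 * x * y)) z (fun u => by simp only [Wty]; ring)]
    have e10 : pX (Wyz k s) t x y z = 2 * 4 * x + 0 := by
      rw [pX, dquad18 _ 4 0 (k * (4 * y ^ 2 + 4 * z ^ 2) + (2 * t + s) * (2 * t)) x
        (fun u => by simp only [Wyz]; ring)]
    have e11 : pY (Wxz k s) t x y z = 2 * 0 * y + (-(4 * k * x) + 8 * x) := by
      rw [pY, dquad18 _ 0 (-(4 * k * x) + 8 * x) (k * (4 * t * z) - 2 * ((2 * t + s) *
        (2 * z))) y (fun u => by simp only [Wxz]; ring)]
    have e12 : pZ (Wxy k s) t x y z = 2 * 0 * z + (-(4 * k * x)) := by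
      rw [pZ, dquad18 _ 0 (-(4 * k * x)) (k * (-(4 * t * y))) z
        (fun u => by simp only [Wxy]; ring)]
    rw [e1, e2, e3, e4, e5, e6, e7, e8, e9, e10, e11, e12]
    refine ⟨by ring, by ring, by ring, by ring⟩
  · -- vanishing locus of σ_s
    ext ⟨t, x, y, z⟩
    simp only [Set.mem_setOf_eq]
    constructor
    · rintro ⟨h1, _, _, h4⟩
      have hy : y = 0 := by nlinarith [sq_nonneg y, sq_nonneg z]
      have hz : z = 0 := by nlinarith [sq_nonneg y, sq_nonneg z]
      exact ⟨hy, hz, by nlinarith⟩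
    · rintro ⟨hy, hz, he⟩
      subst hy; subst hz
      refine ⟨by ring, by ring, by ring, by linear_combination 4 * he⟩
  · -- critical set
    have hfun : (fun q : ℝ × ℝ × ℝ × ℝ =>
        ((q.1 ^ 2 + s * q.1 - q.2.1 ^ 2 + q.2.2.1 ^ 2 - q.2.2.2 ^ 2,
          2 * q.1 * q.2.1 + 2 * q.2.2.1 * q.2.2.2) : ℝ × ℝ)) = FF18 s := by
      funext q; simp only [FF18, Prod.mk.injEq]; constructor <;> first | ring | trivial
    ext ⟨t, x, y, z⟩
    simp only [Set.mem_setOf_eq, hfun, rank_lt_two_iff18]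
    constructor
    · rintro ⟨hy, hz, he⟩ hsurj
      by_cases htx : t = 0 ∧ x = 0
      · obtain ⟨v, hv⟩ := hsurj (0, 1)
        have h2 := congrArg Prod.snd ((fderiv_FF18 s (t, x, y, z) v).symm.trans hv)
        simp only [htx.1, htx.2, hy, hz] at h2
        norm_num at h2
      · obtain ⟨v, hv⟩ := hsurj (2 * t, 2 * x)
        have h12 := (fderiv_FF18 s (t, x, y, z) v).symm.trans hv
        have h1 := congrArg Prod.fst h12
        have h2 := congrArg Prod.snd h12
        simp only [hy, hz] at h1 h2
        have hsum : 4 * t ^ 2 + 4 * x ^ 2 = 0 := by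
          linear_combination (-(2 * t)) * h1 + (-(2 * x)) * h2 + (4 * v.1) * he
        have ht0 : t = 0 := by nlinarith [sq_nonneg t, sq_nonneg x]
        have hx0 : x = 0 := by nlinarith [sq_nonneg t, sq_nonneg x]
        exact htx ⟨ht0, hx0⟩
    · intro h
      by_contra hns
      apply h
      by_cases hyz : y = 0 ∧ z = 0
      · -- then the (t,x) minor must be nonzero
        have he : x ^ 2 + t ^ 2 + s / 2 * t ≠ 0 := by
          intro he; exact hns ⟨hyz.1, hyz.2, he⟩
        have hd : (2 * t + s) * (2 * t) + 4 * x ^ 2 ≠ 0 := by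
          intro hd; exact he (by linarith [hd])
        rintro ⟨r, q⟩
        refine ⟨((2 * t * r + 2 * x * q) / ((2 * t + s) * (2 * t) + 4 * x ^ 2),
          ((2 * t + s) * q - 2 * x * r) / ((2 * t + s) * (2 * t) + 4 * x ^ 2), 0, 0), ?_⟩
        rw [fderiv_FF18]
        simp only [hyz.1, hyz.2, Prod.mk.injEq]
        constructor <;> (have hd' : 2 * t * (2 * t + s) + x ^ 2 * 4 ≠ 0 := (by intro h0; apply hd; linear_combination h0); field_simp; ring)
      · have hd : 4 * y ^ 2 + 4 * z ^ 2 ≠ 0 := by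
          rcases not_and_or.mp hyz with hy | hz
          · positivity
          · positivity
        rintro ⟨r, q⟩
        refine ⟨(0, 0, (2 * y * r + 2 * z * q) / (4 * y ^ 2 + 4 * z ^ 2),
          (2 * y * q - 2 * z * r) / (4 * y ^ 2 + 4 * z ^ 2)), ?_⟩
        rw [fderiv_FF18]
        simp only [Prod.mk.injEq]
        constructor <;> (have hd' : y ^ 2 + z ^ 2 ≠ 0 := (by intro h0; apply hd; linear_combination 4 * h0); field_simp; ring)
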